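/- Under the assumptions of the contraction property (α-strong convexity in the evaluation parameter and β-Lipschitz continuity of the gradient in the distribution-generating parameter), if λ = β/α < 1, then the self-map F : Θ → Θ defined by F(θ) = argmin_{θ'∈Θ} f_θ(θ') has a unique fixed point θ★ ∈ Θ, i.e., there is a unique θ★ satisfying f_{θ★}(θ★) = min_{θ∈Θ} f_{θ★}(θ). -/

import Mathlib

open Finset

/-- Corollary 1 (unique stationary point): if λ = β/α < 1, the self-map
F(θ) = argmin_{θ'∈Θ} f_θ(θ') has a unique fixed point θ★, i.e. there is a unique
θ★ ∈ Θ that minimizes its own loss f_{θ★} over Θ. -/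
theorem unique_stationary_point {d : ℕ}
    (Θ : Set (EuclideanSpace ℝ (Fin d)))
    (hconv : Convex ℝ Θ) (hcomp : IsCompact Θ) (hne : Θ.Nonempty)
    (f : EuclideanSpace ℝ (Fin d) → EuclideanSpace ℝ (Fin d) → ℝ)
    (g : EuclideanSpace ℝ (Fin d) → EuclideanSpace ℝ (Fin d) → EuclideanSpace ℝ (Fin d))
    (α β : ℝ) (hα : 0 < α) (hβ : 0 ≤ β)
    (hsc : ∀ p ∈ Θ, ∀ x ∈ Θ, ∀ y ∈ Θ,
      f p y ≥ f p x + (inner ℝ (g p x) (y - x) : ℝ) + (α / 2) * ‖x - y‖ ^ 2)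
    (hlip : ∀ p₁ ∈ Θ, ∀ p₂ ∈ Θ, ∀ x ∈ Θ, ‖g p₁ x - g p₂ x‖ ≤ β * ‖p₁ - p₂‖)
    (F : EuclideanSpace ℝ (Fin d) → EuclideanSpace ℝ (Fin d))
    (hFmem : ∀ θ ∈ Θ, F θ ∈ Θ)
    (hFmin : ∀ θ ∈ Θ, IsMinOn (f θ) Θ (F θ))
    (hFfoc : ∀ θ ∈ Θ, ∀ θ' ∈ Θ, (inner ℝ (g θ (F θ)) (θ' - F θ) : ℝ) ≥ 0)
    (hlam : β / α < 1) :
    ∃! θstar, θstar ∈ Θ ∧ IsMinOn (f θstar) Θ θstar := by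
  -- Contraction property of F
  have hcontr : ∀ θ₁ ∈ Θ, ∀ θ₂ ∈ Θ, ‖F θ₁ - F θ₂‖ ≤ (β / α) * ‖θ₁ - θ₂‖ := by
    intro θ₁ h₁ θ₂ h₂
    set x := F θ₁ with hx
    set y := F θ₂ with hy
    have hxΘ := hFmem θ₁ h₁
    have hyΘ := hFmem θ₂ h₂
    -- strong monotonicity of ∇f(θ₁,·)
    have h1 := hsc θ₁ h₁ x hxΘ y hyΘ
    have h2 := hsc θ₁ h₁ y hyΘ x hxΘ
    have hmono : (inner ℝ (g θ₁ x - g θ₁ y) (x - y) : ℝ) ≥ α * ‖x - y‖ ^ 2 := by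
      have hrev : ‖y - x‖ = ‖x - y‖ := norm_sub_rev _ _
      have hswap : (inner ℝ (g θ₁ y) (x - y) : ℝ) = - (inner ℝ (g θ₁ y) (y - x) : ℝ) := by
        rw [← inner_neg_right]; congr 1; abel
      rw [inner_sub_left]
      have hinner : (inner ℝ (g θ₁ x) (y - x) : ℝ) = - (inner ℝ (g θ₁ x) (x - y) : ℝ) := by
        rw [← inner_neg_right]; congr 1; abel
      rw [hrev] at h2
      linarith [h1, h2, hswap, hinner]
    -- first-order conditions
    have hfoc1 : (inner ℝ (g θ₁ x) (y - x) : ℝ) ≥ 0 := hFfoc θ₁ h₁ y hyΘ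
    have hfoc2 : (inner ℝ (g θ₂ y) (x - y) : ℝ) ≥ 0 := hFfoc θ₂ h₂ x hxΘ
    have hinner1 : (inner ℝ (g θ₁ x) (x - y) : ℝ) ≤ 0 := by
      have : (inner ℝ (g θ₁ x) (x - y) : ℝ) = - (inner ℝ (g θ₁ x) (y - x) : ℝ) := by
        rw [← inner_neg_right]; congr 1; abel
      linarith [this, hfoc1]
    -- combine
    have hkey : α * ‖x - y‖ ^ 2 ≤ (inner ℝ (g θ₂ y - g θ₁ y) (x - y) : ℝ) := by
      have h3 : (inner ℝ (g θ₁ x - g θ₁ y) (x - y) : ℝ)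
          = (inner ℝ (g θ₁ x) (x - y) : ℝ) - (inner ℝ (g θ₁ y) (x - y) : ℝ) := by
        rw [inner_sub_left]
      have h4 : (inner ℝ (g θ₂ y - g θ₁ y) (x - y) : ℝ)
          = (inner ℝ (g θ₂ y) (x - y) : ℝ) - (inner ℝ (g θ₁ y) (x - y) : ℝ) := by
        rw [inner_sub_left]
      linarith [hmono, hinner1, hfoc2]
    have hcs : (inner ℝ (g θ₂ y - g θ₁ y) (x - y) : ℝ) ≤ ‖g θ₂ y - g θ₁ y‖ * ‖x - y‖ :=
      real_inner_le_norm _ _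
    have hl : ‖g θ₂ y - g θ₁ y‖ ≤ β * ‖θ₂ - θ₁‖ := hlip θ₂ h₂ θ₁ h₁ y hyΘ
    have hrev2 : ‖θ₂ - θ₁‖ = ‖θ₁ - θ₂‖ := norm_sub_rev _ _
    have hchain : α * ‖x - y‖ ^ 2 ≤ β * ‖θ₁ - θ₂‖ * ‖x - y‖ := by
      calc α * ‖x - y‖ ^ 2 ≤ (inner ℝ (g θ₂ y - g θ₁ y) (x - y) : ℝ) := hkey
        _ ≤ ‖g θ₂ y - g θ₁ y‖ * ‖x - y‖ := hcs
        _ ≤ β * ‖θ₁ - θ₂‖ * ‖x - y‖ := by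
            apply mul_le_mul_of_nonneg_right _ (norm_nonneg _)
            rw [← hrev2]; exact hl
    rcases eq_or_lt_of_le (norm_nonneg (x - y)) with h0 | h0
    · rw [← h0]
      positivity
    · have := (mul_le_mul_iff_of_pos_right h0).mp (by nlinarith [hchain] : (α * ‖x - y‖) * ‖x - y‖ ≤ (β * ‖θ₁ - θ₂‖) * ‖x - y‖)
      rw [div_mul_eq_mul_div, le_div_iff₀ hα]
      linarith [this]
  -- any self-minimizer is a fixed point of F
  have hfix : ∀ θ ∈ Θ, IsMinOn (f θ) Θ θ → F θ = θ := by
    intro θ hθ hmin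
    have hFθ := hFmem θ hθ
    have h1 := hsc θ hθ (F θ) hFθ θ hθ
    have h2 : f θ θ ≤ f θ (F θ) := hmin hFθ
    have h3 := hFfoc θ hθ θ hθ
    have h4 : ‖F θ - θ‖ ^ 2 ≤ 0 := by nlinarith [h1, h2, h3]
    have : ‖F θ - θ‖ = 0 := by nlinarith [norm_nonneg (F θ - θ), sq_nonneg ‖F θ - θ‖]
    have := norm_sub_eq_zero_iff.mp this
    exact this
  -- Banach fixed point on the compact subtype
  haveI : CompleteSpace Θ := (hcomp.isClosed).completeSpace_coe
  haveI : Nonempty Θ := hne.to_subtype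
  set K : NNReal := Real.toNNReal (β / α) with hK
  have hKlt : K < 1 := by
    rw [hK]
    exact_mod_cast Real.toNNReal_lt_one.mpr hlam
  set F' : Θ → Θ := fun p => ⟨F p, hFmem p p.2⟩ with hF'
  have hlipF : LipschitzWith K F' := by
    apply LipschitzWith.of_dist_le_mul
    intro p q
    have hd : dist (F' p) (F' q) = ‖F p.1 - F q.1‖ := by
      rw [Subtype.dist_eq, dist_eq_norm]
    have hd2 : dist p q = ‖p.1 - q.1‖ := by
      rw [Subtype.dist_eq, dist_eq_norm]
    have hKc : (K : ℝ) = β / α := Real.coe_toNNReal _ (by positivity)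
    rw [hd, hd2, hKc]
    exact hcontr p.1 p.2 q.1 q.2
  have hcw : ContractingWith K F' := ⟨hKlt, hlipF⟩
  set p := hcw.fixedPoint F' with hp
  have hpfix : F' p = p := hcw.fixedPoint_isFixedPt
  have hFp : F p.1 = p.1 := congrArg Subtype.val hpfix
  refine ⟨p.1, ⟨p.2, ?_⟩, ?_⟩
  · have := hFmin p.1 p.2
    rwa [hFp] at this
  · rintro θ ⟨hθ, hθmin⟩
    have hfθ : F θ = θ := hfix θ hθ hθmin
    have hc := hcontr θ hθ p.1 p.2
    rw [hfθ, hFp] at hc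
    by_contra hne'
    have hpos : 0 < ‖θ - p.1‖ := by
      rw [norm_pos_iff]
      exact sub_ne_zero_of_ne hne'
    nlinarith [hc, hpos, hlam]
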